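/- Let G be a trivalent, 2-edge-connected finite graph, A ⊆ V(G) with G[A] connected, and v ∈ V−A adjacent to A. Then r*(δ(A ∪ {v})) ≤ r*(δ(A)) + 1, and if equality holds then r_{M_G}(A ∪ {v}) > r_{M_G}(A). -/

import Mathlib

/-- A finite undirected multigraph on vertex type `V` with edge type `E`:
each edge has an unordered pair of endpoints (possibly a loop). -/
structure Multigraph (V E : Type*) where
  ends : E → Sym2 V

namespace Multigraph

variable {V E : Type*} (G : Multigraph V E)

/-- `δ(A)`: the set of edges incident to at least one vertex of `A`. -/
def inc (A : Set V) : Set E := {e | ∃ v ∈ A, v ∈ G.ends e}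

/-- Number of connected components of the spanning subgraph of `G`
with edge set `B` (on the full vertex set `V`). -/
noncomputable def numComponentsEdges (B : Set E) : ℕ :=
  Nat.card (Quot (fun u v : V => ∃ e ∈ B, G.ends e = s(u, v)))

/-- Number of connected components `ω(S)` of the subgraph of `G` induced on `S`. -/
noncomputable def numComponentsSub (S : Set V) : ℕ :=
  Nat.card (Quot (fun x y : S => ∃ e, G.ends e = s(x.1, y.1)))

/-- Rank function of the cycle (graphic) matroid of `G`:
`r(B) = |V| - (number of components of (V, B))`. -/
noncomputable def cycleRank (B : Set E) : ℕ :=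
  Nat.card V - G.numComponentsEdges B

/-- Rank function `r*` of the bond (cographic) matroid of `G`:
`r*(B) = |B| + r(E - B) - r(E)`. -/
noncomputable def bondRank (B : Set E) : ℕ :=
  B.ncard + G.cycleRank Bᶜ - G.cycleRank Set.univ

/-- `G` is connected. -/
def Connected : Prop := G.numComponentsEdges Set.univ = 1

/-- `G` is 2-edge-connected: it is connected and deleting any single edge
leaves it connected. -/
def TwoEdgeConnected : Prop :=
  G.Connected ∧ ∀ e : E, G.numComponentsEdges {e}ᶜ = 1

/-- `G` is 2-vertex-connected: it is connected and deleting any single vertex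
leaves it connected. -/
def TwoVertexConnected : Prop :=
  G.Connected ∧ ∀ v : V, G.numComponentsSub {v}ᶜ = 1

/-- `G` has no loops. -/
def Loopless : Prop := ∀ e : E, ¬ (G.ends e).IsDiag

open Classical in
/-- The degree of a vertex, with loops counting twice. -/
noncomputable def degree [Fintype E] (v : V) : ℕ :=
  ∑ e : E, (if G.ends e = s(v, v) then 2 else if v ∈ G.ends e then 1 else 0)

/-- `G` is trivalent: every vertex has degree `3`. -/
def Trivalent [Fintype E] : Prop := ∀ v : V, G.degree v = 3

/-- `A ⊆ V` is the vertex set of a cycle `v₁, …, vₙ, v₁` of `G`: there are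
pairwise distinct vertices `f 0, …, f (n-1)` with range `A` and pairwise
distinct edges joining cyclically consecutive vertices. -/
def IsCycleSet (A : Set V) : Prop :=
  ∃ n : ℕ, 0 < n ∧ ∃ f : ZMod n → V, Function.Injective f ∧ Set.range f = A ∧
    ∃ e : ZMod n → E, Function.Injective e ∧ ∀ i, G.ends (e i) = s(f i, f (i + 1))

/-- The subgraph induced on `A` contains a cycle. -/
def Cyclic (A : Set V) : Prop := ∃ C ⊆ A, G.IsCycleSet C

/-- The subgraph induced on `A` is acyclic (a forest). -/
def Acyclic (A : Set V) : Prop := ¬ G.Cyclic A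

/-- `A` is a circuit of the graph curve matroid `M_G`: `A` is nonempty,
`r*(δ(A)) ≤ |A|`, and no proper nonempty subset `A'` satisfies `r*(δ(A')) ≤ |A'|`. -/
noncomputable def IsCircuitMG (A : Set V) : Prop :=
  A.Nonempty ∧ G.bondRank (G.inc A) ≤ A.ncard ∧
    ∀ A' : Set V, A' ⊂ A → A'.Nonempty → A'.ncard < G.bondRank (G.inc A')

/-- `A` is dependent in the graph curve matroid `M_G`, i.e. contains a circuit. -/
noncomputable def DepMG (A : Set V) : Prop := ∃ C ⊆ A, G.IsCircuitMG C

/-- `A` is independent in the graph curve matroid `M_G`. -/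
noncomputable def IndepMG (A : Set V) : Prop := ¬ G.DepMG A

/-- The rank function of the graph curve matroid `M_G`:
the maximal cardinality of an independent subset. -/
noncomputable def rankMG (A : Set V) : ℕ :=
  sSup {n | ∃ I ⊆ A, G.IndepMG I ∧ I.ncard = n}

/-- `B` is a basis of the graph curve matroid `M_G`:
a maximal independent set. -/
noncomputable def IsBasisMG (B : Set V) : Prop :=
  G.IndepMG B ∧ ∀ I : Set V, G.IndepMG I → B ⊆ I → I = B

end Multigraph
namespace Multigraph

variable {V E : Type*} (G : Multigraph V E)

/-- The edge relation on vertices induced by the edge set `B`. -/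
def rel (B : Set E) : V → V → Prop := fun u v => ∃ e ∈ B, G.ends e = s(u, v)

lemma nce (B : Set E) : G.numComponentsEdges B = Nat.card (Quot (G.rel B)) := rfl

lemma finQuot [Finite V] (B : Set E) : Finite (Quot (G.rel B)) :=
  Finite.of_surjective (Quot.mk _) (fun q => q.exists_rep)

lemma rel_mono {B B' : Set E} (h : B ⊆ B') {x y : V} (hxy : G.rel B x y) : G.rel B' x y := by
  obtain ⟨e, he, hends⟩ := hxy; exact ⟨e, h he, hends⟩

lemma mk_mono {B B' : Set E} (h : B ⊆ B') {x y : V}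
    (hxy : Quot.mk (G.rel B) x = Quot.mk (G.rel B) y) :
    Quot.mk (G.rel B') x = Quot.mk (G.rel B') y := by
  rw [Quot.eq] at hxy ⊢
  exact hxy.mono (fun a b hab => G.rel_mono h hab)

lemma c_mono [Finite V] {B B' : Set E} (h : B ⊆ B') :
    G.numComponentsEdges B' ≤ G.numComponentsEdges B := by
  haveI := G.finQuot B
  rw [nce, nce]
  refine Nat.card_le_card_of_surjective
    (Quot.lift (Quot.mk (G.rel B')) (fun a b hab => Quot.sound (G.rel_mono h hab))) ?_
  intro q
  obtain ⟨x, rfl⟩ := q.exists_rep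
  exact ⟨Quot.mk _ x, rfl⟩

lemma c_le_card [Finite V] (B : Set E) : G.numComponentsEdges B ≤ Nat.card V := by
  rw [nce]
  exact Nat.card_le_card_of_surjective (Quot.mk _) (fun q => q.exists_rep)

/-- The relation on components of `B` that merges the components of `u` and `w`. -/
def sRel (B : Set E) (u w : V) : Quot (G.rel B) → Quot (G.rel B) → Prop :=
  fun p q => p = Quot.mk _ u ∧ q = Quot.mk _ w

noncomputable def insertEquiv {B : Set E} {e : E} {u w : V} (he : G.ends e = s(u, w)) :
    Quot (G.rel (B ∪ {e})) ≃ Quot (G.sRel B u w) where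
  toFun := Quot.lift (fun x => Quot.mk _ (Quot.mk _ x)) (by
    intro x y hxy
    obtain ⟨f, hf, hends⟩ := hxy
    rcases (Set.mem_union _ _ _).mp hf with hf | hf
    · exact congrArg _ (Quot.sound ⟨f, hf, hends⟩)
    · rw [Set.mem_singleton_iff.mp hf, he] at hends
      rcases Sym2.eq_iff.mp hends with ⟨rfl, rfl⟩ | ⟨rfl, rfl⟩
      · exact Quot.sound ⟨rfl, rfl⟩
      · exact (Quot.sound (r := G.sRel B u w) ⟨rfl, rfl⟩).symm)
  invFun := Quot.lift
    (Quot.lift (fun x => Quot.mk _ x)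
      (fun x y hxy => Quot.sound (G.rel_mono Set.subset_union_left hxy)))
    (by
      rintro p q ⟨hp, hq⟩
      subst hp; subst hq
      exact Quot.sound ⟨e, Or.inr rfl, he⟩)
  left_inv := by
    intro q; obtain ⟨x, rfl⟩ := q.exists_rep; rfl
  right_inv := by
    intro q
    obtain ⟨p, rfl⟩ := q.exists_rep
    obtain ⟨x, rfl⟩ := p.exists_rep
    rfl

lemma c_insert_conn {B : Set E} {e : E} {u w : V} (he : G.ends e = s(u, w))
    (h : Quot.mk (G.rel B) u = Quot.mk (G.rel B) w) :
    G.numComponentsEdges (B ∪ {e}) = G.numComponentsEdges B := by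
  rw [nce, nce, Nat.card_congr (G.insertEquiv he)]
  refine Nat.card_congr ⟨Quot.lift id ?_, Quot.mk _, ?_, ?_⟩
  · rintro p q ⟨hp, hq⟩; subst hp; subst hq; exact h
  · intro q; obtain ⟨p, rfl⟩ := q.exists_rep; rfl
  · intro q; rfl

lemma c_insert_not_conn [Finite V] {B : Set E} {e : E} {u w : V} (he : G.ends e = s(u, w))
    (h : Quot.mk (G.rel B) u ≠ Quot.mk (G.rel B) w) :
    G.numComponentsEdges B = G.numComponentsEdges (B ∪ {e}) + 1 := by
  classical
  haveI := G.finQuot B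
  set a := Quot.mk (G.rel B) u with ha
  set b := Quot.mk (G.rel B) w with hb
  set g : Quot (G.sRel B u w) → Quot (G.rel B) :=
    Quot.lift (fun x => if x = b then a else x) (by
      rintro p q ⟨hp, hq⟩
      subst hp; subst hq
      simp [ha, hb]) with hg
  have hinj : Function.Injective g := by
    intro p q hpq
    obtain ⟨x, rfl⟩ := p.exists_rep
    obtain ⟨y, rfl⟩ := q.exists_rep
    simp only [hg] at hpq
    by_cases hx : x = b
    · by_cases hy : y = b
      · rw [hx, hy]
      · rw [if_pos hx, if_neg hy] at hpq
        rw [hx, ← hpq]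
        exact (Quot.sound (r := G.sRel B u w) ⟨rfl, rfl⟩).symm
    · by_cases hy : y = b
      · rw [if_neg hx, if_pos hy] at hpq
        rw [hy, hpq]
        exact Quot.sound (r := G.sRel B u w) ⟨rfl, rfl⟩
      · rw [if_neg hx, if_neg hy] at hpq
        rw [hpq]
  have hrange : Set.range g = {b}ᶜ := by
    ext q
    simp only [Set.mem_range, Set.mem_compl_iff, Set.mem_singleton_iff]
    constructor
    · rintro ⟨p, rfl⟩
      obtain ⟨x, rfl⟩ := p.exists_rep
      simp only [hg]
      split_ifs with hxb
      · exact h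
      · exact hxb
    · intro hq
      exact ⟨Quot.mk _ q, by simp [hg, if_neg hq]⟩
  have h1 : G.numComponentsEdges (B ∪ {e}) = (Set.range g).ncard := by
    rw [nce, Nat.card_congr (G.insertEquiv he), ← Nat.card_coe_set_eq]
    exact Nat.card_congr (Equiv.ofInjective _ hinj)
  have h2 : ({b}ᶜ : Set (Quot (G.rel B))).ncard + 1 = G.numComponentsEdges B := by
    rw [nce, ← Set.ncard_univ]
    have huniv : (insert b ({b}ᶜ : Set (Quot (G.rel B)))) = Set.univ := by
      ext q; simp [em]
    rw [← huniv, Set.ncard_insert_of_notMem (by simp)]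
  rw [h1, hrange, ← h2]

lemma sym2_exists_rep (z : Sym2 V) : ∃ x y, z = s(x, y) := by
  induction z using Sym2.ind with | _ x y => exact ⟨x, y, rfl⟩

lemma c_le_c_insert [Finite V] (B : Set E) (e : E) :
    G.numComponentsEdges B ≤ G.numComponentsEdges (B ∪ {e}) + 1 := by
  obtain ⟨u, w, h⟩ := sym2_exists_rep (G.ends e)
  by_cases hc : Quot.mk (G.rel B) u = Quot.mk (G.rel B) w
  · rw [G.c_insert_conn h hc]; omega
  · rw [G.c_insert_not_conn h hc]

lemma c_le_union [Finite V] [Finite E] (S : Set E) :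
    ∀ B, G.numComponentsEdges B ≤ G.numComponentsEdges (B ∪ S) + S.ncard := by
  refine Set.Finite.induction_on
    (motive := fun S _ => ∀ B, G.numComponentsEdges B ≤ G.numComponentsEdges (B ∪ S) + S.ncard)
    S (Set.toFinite S) (fun B => by simp) ?_
  intro a S haS hSfin ih B
  have h1 := G.c_le_c_insert B a
  have h2 := ih (B ∪ {a})
  have hu : B ∪ {a} ∪ S = B ∪ insert a S := by
    ext x; simp [Set.mem_insert_iff]; tauto
  rw [hu] at h2
  rw [Set.ncard_insert_of_notMem haS (Set.toFinite S)]
  omega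

lemma c_single_supermod [Finite V] {B B' : Set E} (h : B' ⊆ B) (e : E) :
    G.numComponentsEdges B + G.numComponentsEdges (B' ∪ {e}) ≤
      G.numComponentsEdges B' + G.numComponentsEdges (B ∪ {e}) := by
  obtain ⟨u, w, hrep⟩ := sym2_exists_rep (G.ends e)
  by_cases hc : Quot.mk (G.rel B') u = Quot.mk (G.rel B') w
  · rw [G.c_insert_conn hrep hc, G.c_insert_conn hrep (G.mk_mono h hc)]; omega
  · rw [G.c_insert_not_conn hrep hc]
    have := G.c_le_c_insert B e
    omega

lemma c_supermod_aux [Finite V] [Finite E] (S : Set E) :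
    ∀ B B' : Set E, B' ⊆ B →
      G.numComponentsEdges B + G.numComponentsEdges (B' ∪ S) ≤
        G.numComponentsEdges B' + G.numComponentsEdges (B ∪ S) := by
  refine Set.Finite.induction_on
    (motive := fun S _ => ∀ B B' : Set E, B' ⊆ B →
      G.numComponentsEdges B + G.numComponentsEdges (B' ∪ S) ≤
        G.numComponentsEdges B' + G.numComponentsEdges (B ∪ S))
    S (Set.toFinite S) (fun B B' _ => by simp; omega) ?_
  intro a S haS hSfin ih B B' h
  have h1 := G.c_single_supermod h a
  have h2 := ih (B ∪ {a}) (B' ∪ {a}) (Set.union_subset_union_left _ h)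
  have hu : ∀ C : Set E, C ∪ {a} ∪ S = C ∪ insert a S := by
    intro C; ext x; simp [Set.mem_insert_iff]; tauto
  rw [hu, hu] at h2
  omega

lemma c_supermod [Finite V] [Finite E] (X Y : Set E) :
    G.numComponentsEdges X + G.numComponentsEdges Y ≤
      G.numComponentsEdges (X ∪ Y) + G.numComponentsEdges (X ∩ Y) := by
  have := G.c_supermod_aux X Y (X ∩ Y) Set.inter_subset_right
  have h1 : X ∩ Y ∪ X = X := by ext x; simp; tauto
  have h2 : Y ∪ X = X ∪ Y := Set.union_comm _ _
  rw [h1, h2] at this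
  omega


lemma inc_union (X Y : Set V) : G.inc (X ∪ Y) = G.inc X ∪ G.inc Y := by
  ext e; simp only [inc, Set.mem_setOf_eq, Set.mem_union]
  constructor
  · rintro ⟨x, hx | hx, hmem⟩
    · exact Or.inl ⟨x, hx, hmem⟩
    · exact Or.inr ⟨x, hx, hmem⟩
  · rintro (⟨x, hx, hmem⟩ | ⟨x, hx, hmem⟩)
    · exact ⟨x, Or.inl hx, hmem⟩
    · exact ⟨x, Or.inr hx, hmem⟩

lemma inc_inter_subset (X Y : Set V) : G.inc (X ∩ Y) ⊆ G.inc X ∩ G.inc Y := by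
  rintro e ⟨x, ⟨hx1, hx2⟩, hmem⟩
  exact ⟨⟨x, hx1, hmem⟩, ⟨x, hx2, hmem⟩⟩

section Conn

variable [Finite V] [Finite E] (hconn : G.numComponentsEdges Set.univ = 1)
include hconn

lemma bond_add (B : Set E) :
    G.bondRank B + G.numComponentsEdges Bᶜ = B.ncard + 1 := by
  have hm1 : 1 ≤ G.numComponentsEdges Bᶜ := by
    rw [← hconn]; exact G.c_mono (Set.subset_univ _)
  have hmn : G.numComponentsEdges Bᶜ ≤ Nat.card V := G.c_le_card _
  have hma : G.numComponentsEdges Bᶜ ≤ B.ncard + 1 := by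
    have := G.c_le_union B Bᶜ
    rw [Set.compl_union_self, hconn] at this
    omega
  have hn1 : 1 ≤ Nat.card V := le_trans hm1 hmn
  show B.ncard + (Nat.card V - G.numComponentsEdges Bᶜ) -
      (Nat.card V - G.numComponentsEdges Set.univ) + G.numComponentsEdges Bᶜ = B.ncard + 1
  rw [hconn]
  omega

lemma bond_mono {X Y : Set E} (h : X ⊆ Y) : G.bondRank X ≤ G.bondRank Y := by
  have hx := G.bond_add hconn X
  have hy := G.bond_add hconn Y
  have hmono : G.numComponentsEdges Xᶜ ≤ G.numComponentsEdges Yᶜ :=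
    G.c_mono (Set.compl_subset_compl.mpr h)
  have hub : G.numComponentsEdges Yᶜ ≤ G.numComponentsEdges Xᶜ + (Y \ X).ncard := by
    have := G.c_le_union (Y \ X) Yᶜ
    have hu : Yᶜ ∪ (Y \ X) = Xᶜ := by
      ext x; simp only [Set.mem_union, Set.mem_compl_iff, Set.mem_diff]
      by_cases hx : x ∈ X
      · simp [hx, h hx]
      · simp [hx]; tauto
    rw [hu] at this
    exact this
  have hcard : (Y \ X).ncard + X.ncard = Y.ncard :=
    Set.ncard_diff_add_ncard_of_subset h (Set.toFinite Y)
  omega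

lemma bond_submod (X Y : Set E) :
    G.bondRank (X ∪ Y) + G.bondRank (X ∩ Y) ≤ G.bondRank X + G.bondRank Y := by
  have h1 := G.bond_add hconn X
  have h2 := G.bond_add hconn Y
  have h3 := G.bond_add hconn (X ∪ Y)
  have h4 := G.bond_add hconn (X ∩ Y)
  have h5 := G.c_supermod Xᶜ Yᶜ
  rw [← Set.compl_inter, ← Set.compl_union] at h5
  have h6 : (X ∪ Y).ncard + (X ∩ Y).ncard = X.ncard + Y.ncard :=
    Set.ncard_union_add_ncard_inter X Y (Set.toFinite X) (Set.toFinite Y)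
  omega

lemma bond_inc_submod (X Y : Set V) :
    G.bondRank (G.inc (X ∪ Y)) + G.bondRank (G.inc (X ∩ Y)) ≤
      G.bondRank (G.inc X) + G.bondRank (G.inc Y) := by
  have h1 : G.bondRank (G.inc (X ∩ Y)) ≤ G.bondRank (G.inc X ∩ G.inc Y) :=
    G.bond_mono hconn (G.inc_inter_subset X Y)
  have h2 := G.bond_submod hconn (G.inc X) (G.inc Y)
  rw [G.inc_union]
  omega

end Conn

lemma isolated {B : Set E} {v : V} (hv : ∀ f ∈ B, v ∉ G.ends f) (x : V)
    (h : Quot.mk (G.rel B) x = Quot.mk (G.rel B) v) : x = v := by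
  rw [Quot.eq] at h
  suffices h' : ∀ a b : V, Relation.EqvGen (G.rel B) a b → (a = v ↔ b = v) by
    exact (h' _ _ h).mpr rfl
  intro a b hab
  induction hab with
  | rel a b hr =>
    obtain ⟨f, hf, he⟩ := hr
    have ha : a ≠ v := by
      rintro rfl
      exact hv f hf (by rw [he]; exact Sym2.mem_mk_left _ _)
    have hb : b ≠ v := by
      rintro rfl
      exact hv f hf (by rw [he]; exact Sym2.mem_mk_right _ _)
    exact iff_of_false ha hb
  | refl => exact Iff.rfl
  | symm _ _ _ ih => exact ih.symm
  | trans _ _ _ _ _ ih1 ih2 => exact ih1.trans ih2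

lemma two_le_c [Finite V] {B : Set E} {D : Set V} {d x : V} (hd : d ∈ D) (hx : x ∉ D)
    (hcl : ∀ f ∈ B, ∀ p q : V, G.ends f = s(p, q) → (p ∈ D ↔ q ∈ D)) :
    2 ≤ G.numComponentsEdges B := by
  haveI := G.finQuot B
  have hne : Quot.mk (G.rel B) d ≠ Quot.mk (G.rel B) x := by
    intro h
    rw [Quot.eq] at h
    have hinv : ∀ a b : V, Relation.EqvGen (G.rel B) a b → (a ∈ D ↔ b ∈ D) := by
      intro a b hab
      induction hab with
      | rel a b hr =>
        obtain ⟨f, hf, he⟩ := hr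
        exact hcl f hf a b he
      | refl => exact Iff.rfl
      | symm _ _ _ ih => exact ih.symm
      | trans _ _ _ _ _ ih1 ih2 => exact ih1.trans ih2
    exact hx ((hinv _ _ h).mp hd)
  haveI : Nontrivial (Quot (G.rel B)) := ⟨_, _, hne⟩
  rw [nce]
  exact Finite.one_lt_card

lemma inc_singleton (v : V) : G.inc {v} = {e | v ∈ G.ends e} := by
  ext e; simp [inc]

lemma edge_structure [Fintype E] (h3 : G.Trivalent) (v : V) :
    (∃ l e0 z, l ≠ e0 ∧ G.ends l = s(v, v) ∧ G.ends e0 = s(v, z) ∧ z ≠ v ∧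
      {e : E | v ∈ G.ends e} = {l, e0}) ∨
    (∃ f1 f2 f3 : E, ∃ w1 w2 w3 : V, f1 ≠ f2 ∧ f1 ≠ f3 ∧ f2 ≠ f3 ∧
      G.ends f1 = s(v, w1) ∧ G.ends f2 = s(v, w2) ∧ G.ends f3 = s(v, w3) ∧
      w1 ≠ v ∧ w2 ≠ v ∧ w3 ≠ v ∧ {e : E | v ∈ G.ends e} = {f1, f2, f3}) := by
  classical
  have hdeg : G.degree v = 3 := h3 v
  set L := Finset.univ.filter (fun e => G.ends e = s(v, v)) with hL
  set N1 := Finset.univ.filter (fun e => G.ends e ≠ s(v, v) ∧ v ∈ G.ends e) with hN1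
  have hLmem : ∀ e, e ∈ L ↔ G.ends e = s(v, v) := by intro e; simp [hL]
  have hN1mem : ∀ e, e ∈ N1 ↔ (G.ends e ≠ s(v, v) ∧ v ∈ G.ends e) := by intro e; simp [hN1]
  have key : 2 * L.card + N1.card = 3 := by
    have hpt : ∀ e : E, (if G.ends e = s(v, v) then 2 else if v ∈ G.ends e then 1 else 0)
        = 2 * (if G.ends e = s(v, v) then 1 else 0)
          + (if (G.ends e ≠ s(v, v) ∧ v ∈ G.ends e) then 1 else 0) := by
      intro e
      by_cases h1 : G.ends e = s(v, v) <;> by_cases hm : v ∈ G.ends e <;> simp [h1, hm]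
    have hd2 : (∑ e : E, (if G.ends e = s(v, v) then 2 else if v ∈ G.ends e then 1 else 0)) = 3 := by
      rw [← hdeg]; rfl
    rw [Finset.sum_congr rfl (fun e _ => hpt e)] at hd2
    rw [Finset.sum_add_distrib, ← Finset.mul_sum, Finset.sum_boole, Finset.sum_boole] at hd2
    rw [hL, hN1]
    exact_mod_cast hd2
  have hcases : (L.card = 0 ∧ N1.card = 3) ∨ (L.card = 1 ∧ N1.card = 1) := by omega
  rcases hcases with ⟨hL0, hN3⟩ | ⟨hL1, hN11⟩
  · right
    obtain ⟨f1, f2, f3, h12, h13, h23, hset⟩ := Finset.card_eq_three.mp hN3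
    have hm : ∀ f, f ∈ N1 ↔ (f = f1 ∨ f = f2 ∨ f = f3) := by intro f; rw [hset]; simp
    have hf1 := (hN1mem f1).mp ((hm f1).mpr (Or.inl rfl))
    have hf2 := (hN1mem f2).mp ((hm f2).mpr (Or.inr (Or.inl rfl)))
    have hf3 := (hN1mem f3).mp ((hm f3).mpr (Or.inr (Or.inr rfl)))
    obtain ⟨w1, hw1⟩ := Sym2.mem_iff_exists.mp hf1.2
    obtain ⟨w2, hw2⟩ := Sym2.mem_iff_exists.mp hf2.2
    obtain ⟨w3, hw3⟩ := Sym2.mem_iff_exists.mp hf3.2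
    refine ⟨f1, f2, f3, w1, w2, w3, h12, h13, h23, hw1, hw2, hw3,
      fun h => hf1.1 (by rw [hw1, h]), fun h => hf2.1 (by rw [hw2, h]),
      fun h => hf3.1 (by rw [hw3, h]), ?_⟩
    ext e
    simp only [Set.mem_setOf_eq, Set.mem_insert_iff, Set.mem_singleton_iff]
    constructor
    · intro hv
      by_cases hloop : G.ends e = s(v, v)
      · exfalso
        have : e ∈ L := (hLmem e).mpr hloop
        rw [Finset.card_eq_zero.mp hL0] at this
        exact absurd this (Finset.notMem_empty e)
      · exact (hm e).mp ((hN1mem e).mpr ⟨hloop, hv⟩)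
    · rintro (rfl | rfl | rfl)
      · rw [hw1]; exact Sym2.mem_mk_left _ _
      · rw [hw2]; exact Sym2.mem_mk_left _ _
      · rw [hw3]; exact Sym2.mem_mk_left _ _
  · left
    obtain ⟨l, hLeq⟩ := Finset.card_eq_one.mp hL1
    obtain ⟨e0, hNeq⟩ := Finset.card_eq_one.mp hN11
    have hl : G.ends l = s(v, v) := (hLmem l).mp (by rw [hLeq]; exact Finset.mem_singleton_self l)
    have he0 := (hN1mem e0).mp (by rw [hNeq]; exact Finset.mem_singleton_self e0)
    obtain ⟨z, hz⟩ := Sym2.mem_iff_exists.mp he0.2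
    refine ⟨l, e0, z, fun h => he0.1 (by rw [← h, hl]), hl, hz,
      fun h => he0.1 (by rw [hz, h]), ?_⟩
    ext e
    simp only [Set.mem_setOf_eq, Set.mem_insert_iff, Set.mem_singleton_iff]
    constructor
    · intro hv
      by_cases hloop : G.ends e = s(v, v)
      · left
        have : e ∈ L := (hLmem e).mpr hloop
        rw [hLeq] at this; exact Finset.mem_singleton.mp this
      · right
        have : e ∈ N1 := (hN1mem e).mpr ⟨hloop, hv⟩
        rw [hNeq] at this; exact Finset.mem_singleton.mp this
    · rintro (rfl | rfl)
      · rw [hl]; exact Sym2.mem_mk_left _ _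
      · rw [hz]; exact Sym2.mem_mk_left _ _

lemma two_le_bond_inc_singleton [Fintype V] [Fintype E] (h3 : G.Trivalent)
    (h2 : G.TwoEdgeConnected) (v : V) : 2 ≤ G.bondRank (G.inc {v}) := by
  classical
  have hconn : G.numComponentsEdges Set.univ = 1 := h2.1
  have hN : G.inc {v} = {e | v ∈ G.ends e} := G.inc_singleton v
  have hid := G.bond_add hconn (G.inc {v})
  rcases G.edge_structure h3 v with ⟨l, e0, z, hle, hl, he0, hzv, hset⟩ |
    ⟨f1, f2, f3, w1, w2, w3, h12, h13, h23, hw1, hw2, hw3, hv1, hv2, hv3, hset⟩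
  · have hcard : (G.inc {v}).ncard = 2 := by rw [hN, hset]; exact Set.ncard_pair hle
    have hcomp : G.numComponentsEdges (G.inc {v})ᶜ = 1 := by
      have hu : (G.inc {v})ᶜ ∪ {l} = ({e0} : Set E)ᶜ := by
        rw [hN, hset]; ext f
        simp only [Set.mem_union, Set.mem_compl_iff, Set.mem_insert_iff, Set.mem_singleton_iff]
        constructor
        · rintro (hf | rfl)
          · intro h; exact hf (Or.inr h)
          · intro h; exact hle h
        · intro hf
          by_cases hfl : f = l
          · exact Or.inr hfl
          · refine Or.inl ?_
            rintro (h | h)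
            · exact hfl h
            · exact hf h
      have hins := G.c_insert_conn (B := (G.inc {v})ᶜ) hl rfl
      rw [hu] at hins
      rw [← hins]
      exact h2.2 e0
    omega
  · have hcard : (G.inc {v}).ncard = 3 := by
      rw [hN, hset]
      rw [Set.ncard_insert_of_notMem (by simp [h12, h13]) (Set.toFinite _), Set.ncard_pair h23]
    suffices hc2 : G.numComponentsEdges (G.inc {v})ᶜ ≤ 2 by omega
    by_contra hcon3
    have hc3 : 3 ≤ G.numComponentsEdges (G.inc {v})ᶜ := by omega
    set Nc := (G.inc {v})ᶜ with hNc
    have hNcmem : ∀ f, f ∈ Nc ↔ v ∉ G.ends f := by intro f; rw [hNc, hN]; simp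
    have hfm : ∀ f, v ∈ G.ends f → f = f1 ∨ f = f2 ∨ f = f3 := by
      intro f hf
      have : f ∈ ({f1, f2, f3} : Set E) := by rw [← hset]; exact hf
      simpa using this
    have hiso : ∀ x, Quot.mk (G.rel Nc) x = Quot.mk (G.rel Nc) v → x = v :=
      G.isolated (fun f hf => (hNcmem f).mp hf)
    have hvw : ∀ w : V, w ≠ v → Quot.mk (G.rel Nc) v ≠ Quot.mk (G.rel Nc) w := by
      intro w hw h
      exact hw (hiso w h.symm)
    have cut : ∀ (g : E) (wg : V), G.ends g = s(v, wg) → wg ≠ v →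
        (∀ f, v ∈ G.ends f → f ≠ g → ∃ w', G.ends f = s(v, w') ∧
          Quot.mk (G.rel Nc) w' ≠ Quot.mk (G.rel Nc) wg) →
        False := by
      intro g wg hg hwgv hothers
      have hvD : v ∉ {x | Quot.mk (G.rel Nc) x = Quot.mk (G.rel Nc) wg} := hvw wg hwgv
      have h2le : 2 ≤ G.numComponentsEdges ({g} : Set E)ᶜ := by
        refine G.two_le_c (D := {x | Quot.mk (G.rel Nc) x = Quot.mk (G.rel Nc) wg})
          (d := wg) (x := v) rfl hvD ?_
        intro f hf p q hpq
        by_cases hfN : v ∈ G.ends f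
        · obtain ⟨w', hw', hww⟩ := hothers f hfN (by simpa using hf)
          rw [hw'] at hpq
          rcases Sym2.eq_iff.mp hpq with ⟨hp, hq⟩ | ⟨hp, hq⟩
          · rw [← hp, ← hq]; exact iff_of_false hvD hww
          · rw [← hp, ← hq]; exact iff_of_false hww hvD
        · have hs : Quot.mk (G.rel Nc) p = Quot.mk (G.rel Nc) q :=
            Quot.sound ⟨f, (hNcmem f).mpr hfN, hpq⟩
          simp only [Set.mem_setOf_eq]
          rw [hs]
      rw [h2.2 g] at h2le; omega
    by_cases e12 : Quot.mk (G.rel Nc) w1 = Quot.mk (G.rel Nc) w2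
    · by_cases e13 : Quot.mk (G.rel Nc) w1 = Quot.mk (G.rel Nc) w3
      · obtain ⟨q, hq1, hq2⟩ :
            ∃ q : Quot (G.rel Nc), q ≠ Quot.mk (G.rel Nc) v ∧ q ≠ Quot.mk (G.rel Nc) w1 := by
          by_contra hcon
          push_neg at hcon
          have hsurj : Function.Surjective
              (fun b : Bool => if b then Quot.mk (G.rel Nc) v else Quot.mk (G.rel Nc) w1) := by
            intro q
            by_cases hq : q = Quot.mk (G.rel Nc) v
            · exact ⟨true, hq.symm⟩
            · exact ⟨false, (hcon q hq).symm⟩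
          have hle2 := Nat.card_le_card_of_surjective _ hsurj
          have hle2' : G.numComponentsEdges Nc ≤ 2 := by
            rw [nce]
            simpa [Nat.card_eq_fintype_card] using hle2
          omega
        obtain ⟨d, rfl⟩ := q.exists_rep
        have h2le : 2 ≤ G.numComponentsEdges (Set.univ : Set E) := by
          refine G.two_le_c (D := {x | Quot.mk (G.rel Nc) x = Quot.mk (G.rel Nc) d})
            (d := d) (x := v) rfl (fun h => hq1 (Set.mem_setOf_eq ▸ h).symm) ?_
          intro f _ p q' hpq
          by_cases hfN : v ∈ G.ends f
          · obtain ⟨w', hw', hwq⟩ :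
                ∃ w', G.ends f = s(v, w') ∧ Quot.mk (G.rel Nc) w' = Quot.mk (G.rel Nc) w1 := by
              rcases hfm f hfN with rfl | rfl | rfl
              exacts [⟨w1, hw1, rfl⟩, ⟨w2, hw2, e12.symm⟩, ⟨w3, hw3, e13.symm⟩]
            have hvD : v ∉ {x | Quot.mk (G.rel Nc) x = Quot.mk (G.rel Nc) d} :=
              fun h => hq1 (Set.mem_setOf_eq ▸ h).symm
            have hwD : w' ∉ {x | Quot.mk (G.rel Nc) x = Quot.mk (G.rel Nc) d} := by
              intro h
              exact hq2 ((Set.mem_setOf_eq ▸ h).symm.trans hwq)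
            rw [hw'] at hpq
            rcases Sym2.eq_iff.mp hpq with ⟨hp, hq⟩ | ⟨hp, hq⟩
            · rw [← hp, ← hq]; exact iff_of_false hvD hwD
            · rw [← hp, ← hq]; exact iff_of_false hwD hvD
          · have hs : Quot.mk (G.rel Nc) p = Quot.mk (G.rel Nc) q' :=
              Quot.sound ⟨f, (hNcmem f).mpr hfN, hpq⟩
            simp only [Set.mem_setOf_eq]
            rw [hs]
        rw [hconn] at h2le; omega
      · refine cut f3 w3 hw3 hv3 (fun f hf hfg => ?_)
        rcases hfm f hf with rfl | rfl | rfl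
        · exact ⟨w1, hw1, fun h => e13 h⟩
        · exact ⟨w2, hw2, fun h => e13 (e12.trans h)⟩
        · exact absurd rfl hfg
    · by_cases e13 : Quot.mk (G.rel Nc) w1 = Quot.mk (G.rel Nc) w3
      · refine cut f2 w2 hw2 hv2 (fun f hf hfg => ?_)
        rcases hfm f hf with rfl | rfl | rfl
        · exact ⟨w1, hw1, fun h => e12 h⟩
        · exact absurd rfl hfg
        · exact ⟨w3, hw3, fun h => e12 (e13.trans h)⟩
      · refine cut f1 w1 hw1 hv1 (fun f hf hfg => ?_)
        rcases hfm f hf with rfl | rfl | rfl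
        · exact absurd rfl hfg
        · exact ⟨w2, hw2, fun h => e12 h.symm⟩
        · exact ⟨w3, hw3, fun h => e13 h.symm⟩

end Multigraph


/-- Let `G` be trivalent and 2-edge-connected, `A ⊆ V` with
`G[A]` connected, and `v ∈ V - A` adjacent to `A`. Then
`r*(δ(A ∪ {v})) ≤ r*(δ(A)) + 1`, and if equality holds then
`r_{M_G}(A ∪ {v}) > r_{M_G}(A)`. -/
theorem bondRank_inc_insert_adjacent {V E : Type*} [Fintype V] [Fintype E]
    (G : Multigraph V E) (h3 : G.Trivalent) (h2 : G.TwoEdgeConnected)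
    (A : Set V) (hA : G.numComponentsSub A = 1)
    (v : V) (hv : v ∉ A) (hadj : ∃ e : E, ∃ a ∈ A, G.ends e = s(v, a)) :
    G.bondRank (G.inc (A ∪ {v})) ≤ G.bondRank (G.inc A) + 1 ∧
    (G.bondRank (G.inc (A ∪ {v})) = G.bondRank (G.inc A) + 1 →
      G.rankMG A < G.rankMG (A ∪ {v})) := by
  classical
  obtain ⟨hconn', h2e⟩ := h2
  have hconn : G.numComponentsEdges Set.univ = 1 := hconn'
  set B := G.inc A with hB
  set N : Set E := {e | v ∈ G.ends e} with hNdef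
  have hB' : G.inc (A ∪ {v}) = B ∪ N := by
    ext e
    constructor
    · rintro ⟨x, hx | hx, hm⟩
      · exact Or.inl ⟨x, hx, hm⟩
      · rw [show x = v from hx] at hm
        exact Or.inr hm
    · rintro (⟨x, hx, hm⟩ | hm)
      · exact ⟨x, Or.inl hx, hm⟩
      · exact ⟨v, Or.inr rfl, hm⟩
  obtain ⟨e0, a, ha, hea⟩ := hadj
  have he0N : e0 ∈ N := by rw [hNdef]; show v ∈ G.ends e0; rw [hea]; exact Sym2.mem_mk_left _ _
  have he0B : e0 ∈ B := ⟨a, ha, by rw [hea]; exact Sym2.mem_mk_right _ _⟩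
  have hidB := G.bond_add hconn B
  have hidB' := G.bond_add hconn (B ∪ N)
  have hunion : (B ∪ N).ncard = B.ncard + (N \ B).ncard := by
    rw [← Set.union_diff_self]
    exact Set.ncard_union_eq Set.disjoint_sdiff_right (Set.toFinite _) (Set.toFinite _)
  have hmonoc : G.numComponentsEdges Bᶜ ≤ G.numComponentsEdges (B ∪ N)ᶜ :=
    G.c_mono (Set.compl_subset_compl.mpr Set.subset_union_left)
  have part1 : G.bondRank (G.inc (A ∪ {v})) ≤ G.bondRank B + 1 := by
    rw [hB']
    by_cases hk : (N \ B).ncard ≤ 1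
    · omega
    · rcases G.edge_structure h3 v with ⟨l, e0', z, hle, hl, he0', hzv, hset⟩ |
        ⟨f1, f2, f3, w1, w2, w3, h12, h13, h23, hw1, hw2, hw3, hv1, hv2, hv3, hset⟩
      · exfalso
        apply hk
        have hN2 : N = {l, e0'} := by rw [hNdef, hset]
        have hsub : N \ B ⊆ N \ {e0} :=
          Set.diff_subset_diff_right (Set.singleton_subset_iff.mpr he0B)
        have h1 : (N \ {e0}).ncard + 1 = N.ncard :=
          Set.ncard_diff_singleton_add_one he0N (Set.toFinite N)
        have h2c : N.ncard = 2 := by rw [hN2]; exact Set.ncard_pair hle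
        have h3' := Set.ncard_le_ncard hsub (Set.toFinite _)
        omega
      · have hN3 : N = {f1, f2, f3} := by rw [hNdef, hset]
        have hNcard : N.ncard = 3 := by
          rw [hN3, Set.ncard_insert_of_notMem (by simp [h12, h13]) (Set.toFinite _),
            Set.ncard_pair h23]
        have hk2 : (N \ B).ncard = 2 := by
          have hsub : N \ B ⊆ N \ {e0} :=
            Set.diff_subset_diff_right (Set.singleton_subset_iff.mpr he0B)
          have h1 : (N \ {e0}).ncard + 1 = N.ncard :=
            Set.ncard_diff_singleton_add_one he0N (Set.toFinite N)
          have h3' := Set.ncard_le_ncard hsub (Set.toFinite _)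
          omega
        have hnon : (N \ B).Nonempty := by
          rw [← Set.ncard_pos (Set.toFinite _)]
          omega
        obtain ⟨e1, he1N, he1B⟩ := hnon
        obtain ⟨w, hw, hwv⟩ : ∃ w, G.ends e1 = s(v, w) ∧ w ≠ v := by
          have hmem : e1 ∈ ({f1, f2, f3} : Set E) := by rw [← hN3]; exact he1N
          rcases (by simpa using hmem : e1 = f1 ∨ e1 = f2 ∨ e1 = f3) with rfl | rfl | rfl
          exacts [⟨w1, hw1, hv1⟩, ⟨w2, hw2, hv2⟩, ⟨w3, hw3, hv3⟩]
        have hiso : ∀ x, Quot.mk (G.rel (B ∪ N)ᶜ) x = Quot.mk (G.rel (B ∪ N)ᶜ) v → x = v := by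
          refine G.isolated (fun f hf hvf => ?_)
          exact hf (Or.inr hvf)
        have hne' : Quot.mk (G.rel (B ∪ N)ᶜ) v ≠ Quot.mk (G.rel (B ∪ N)ᶜ) w :=
          fun h => hwv (hiso w h.symm)
        have hdrop := G.c_insert_not_conn (B := (B ∪ N)ᶜ) hw hne'
        have hsub2 : (B ∪ N)ᶜ ∪ {e1} ⊆ Bᶜ := by
          rintro f (hf | rfl)
          · exact fun hfB => hf (Or.inl hfB)
          · exact he1B
        have hmono2 := G.c_mono hsub2
        omega
  refine ⟨part1, ?_⟩
  intro heq
  have hbdd : ∀ S : Set V, BddAbove {n | ∃ I ⊆ S, G.IndepMG I ∧ I.ncard = n} := by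
    intro S
    refine ⟨Nat.card V, ?_⟩
    rintro n ⟨I, hIS, hind, rfl⟩
    calc I.ncard ≤ (Set.univ : Set V).ncard :=
          Set.ncard_le_ncard (Set.subset_univ I) Set.finite_univ
      _ = Nat.card V := Set.ncard_univ V
  have hempty : G.IndepMG ∅ := by
    rintro ⟨C, hC, hcirc⟩
    obtain ⟨x, hx⟩ := hcirc.1
    exact absurd (hC hx) (Set.notMem_empty x)
  have hne : {n | ∃ I ⊆ A, G.IndepMG I ∧ I.ncard = n}.Nonempty :=
    ⟨0, ∅, Set.empty_subset A, hempty, Set.ncard_empty V⟩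
  obtain ⟨I, hIA, hInd, hIcard⟩ := Nat.sSup_mem hne (hbdd A)
  have hvI : v ∉ I := fun h => hv (hIA h)
  have hins : G.IndepMG (I ∪ {v}) := by
    rintro ⟨C, hC, hcirc⟩
    by_cases hvC : v ∈ C
    · by_cases hCv : C = {v}
      · have hb1 : G.bondRank (G.inc C) ≤ C.ncard := hcirc.2.1
        rw [hCv, Set.ncard_singleton] at hb1
        have h2b := G.two_le_bond_inc_singleton h3 ⟨hconn', h2e⟩ v
        omega
      · set C' := C \ {v} with hC'def
        have hC'A : C' ⊆ A := by
          rintro x ⟨hxC, hxv⟩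
          rcases hC hxC with hx | hx
          · exact hIA hx
          · exact absurd hx hxv
        have hC'ne : C'.Nonempty := by
          by_contra hemp
          rw [Set.not_nonempty_iff_eq_empty] at hemp
          apply hCv
          apply Set.eq_singleton_iff_unique_mem.mpr
          refine ⟨hvC, fun x hx => ?_⟩
          by_contra hxv
          have hxC' : x ∈ C' := ⟨hx, hxv⟩
          rw [hemp] at hxC'
          exact hxC'
        have hssub : C' ⊂ C := ⟨Set.diff_subset, fun hsub => (hsub hvC).2 rfl⟩
        have hmin := hcirc.2.2 C' hssub hC'ne
        have hAC : A ∪ C = A ∪ {v} := by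
          apply subset_antisymm
          · refine Set.union_subset Set.subset_union_left (fun x hx => ?_)
            rcases hC hx with h | h
            · exact Or.inl (hIA h)
            · exact Or.inr h
          · refine Set.union_subset Set.subset_union_left (fun x hx => ?_)
            right
            rw [show x = v from hx]
            exact hvC
        have hACi : A ∩ C = C' := by
          ext x
          constructor
          · rintro ⟨hxA, hxC⟩
            refine ⟨hxC, fun h => ?_⟩
            apply hv
            rw [← show x = v from h]
            exact hxA
          · rintro ⟨hxC, hxv⟩
            exact ⟨hC'A ⟨hxC, hxv⟩, hxC⟩
        have hsubm := G.bond_inc_submod hconn A C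
        rw [hAC, hACi, ← hB] at hsubm
        have hCcard : C'.ncard + 1 = C.ncard :=
          Set.ncard_diff_singleton_add_one hvC (Set.toFinite C)
        have hble : G.bondRank (G.inc C) ≤ C.ncard := hcirc.2.1
        omega
    · apply hInd
      refine ⟨C, fun x hx => ?_, hcirc⟩
      rcases hC hx with h | h
      · exact h
      · exfalso
        apply hvC
        rw [← show x = v from h]
        exact hx
  have hmem2 : I.ncard + 1 ∈ {n | ∃ J ⊆ A ∪ {v}, G.IndepMG J ∧ J.ncard = n} := by
    refine ⟨I ∪ {v}, Set.union_subset_union_left _ hIA, hins, ?_⟩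
    rw [Set.union_singleton, Set.ncard_insert_of_notMem hvI (Set.toFinite I)]
  have hle := le_csSup (hbdd (A ∪ {v})) hmem2
  show G.rankMG A < G.rankMG (A ∪ {v})
  rw [Multigraph.rankMG, Multigraph.rankMG]
  omega
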